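/- For any constants c₁, c₂, c₃ ∈ ℝ, the function s(x) = c₁/(x+1) + (c₂/(x+1))·∫₀ˣ 1/(y−1) dy + (c₃/(x+1))·∫₀ˣ log(y)/(y−1) dy satisfies, for all x ∈ (0,1), −(x−1)²(x+1)x³·s'''(x) − (x−1)(2x−1)(3x+1)x²·s''(x) − (x−1)(7x−1)x²·s'(x) − (x−1)x²·s(x) = 0. -/

import Mathlib

open MeasureTheory Real intervalIntegral Set

noncomputable def Fi (x : ℝ) : ℝ := ∫ y in (0:ℝ)..x, 1 / (y - 1)
noncomputable def Gi (x : ℝ) : ℝ := ∫ y in (0:ℝ)..x, Real.log y / (y - 1)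

lemma Fi_hasDeriv {x : ℝ} (hx : x ∈ Set.Ioo (0:ℝ) 1) :
    HasDerivAt Fi (1 / (x - 1)) x := by
  obtain ⟨hx0, hx1⟩ := hx
  have hne : ∀ y ∈ Set.uIcc (0:ℝ) x, y - 1 ≠ 0 := by
    intro y hy
    rw [Set.uIcc_of_le hx0.le] at hy
    have := hy.2; intro h; nlinarith
  have hcont : ContinuousOn (fun y => 1 / (y - 1)) (Set.uIcc (0:ℝ) x) :=
    ContinuousOn.div continuousOn_const (by fun_prop) hne
  have hmeas : Measurable (fun y : ℝ => 1 / (y - 1)) :=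
    Measurable.div measurable_const (measurable_id.sub measurable_const)
  exact integral_hasDerivAt_right hcont.intervalIntegrable
    hmeas.stronglyMeasurable.stronglyMeasurableAtFilter
    (ContinuousAt.div continuousAt_const (by fun_prop) (by intro h; nlinarith))

lemma Gi_integrable {x : ℝ} (hx0 : 0 < x) (hx1 : x < 1) :
    IntervalIntegrable (fun y => Real.log y / (y - 1)) volume 0 x := by
  have hdom : IntervalIntegrable (fun y : ℝ => (2 / (1 - x)) * y ^ (-(1/2) : ℝ))
      volume 0 x :=
    (intervalIntegrable_rpow' (by norm_num)).const_mul _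
  apply hdom.mono_fun
  · exact ((Real.measurable_log.div (measurable_id.sub measurable_const)).aestronglyMeasurable)
  · filter_upwards [ae_restrict_mem measurableSet_uIoc] with y hy
    rw [Set.uIoc_of_le hx0.le] at hy
    obtain ⟨hy0, hyx⟩ := hy
    have hy1 : y < 1 := lt_of_le_of_lt hyx hx1
    have hs : (0:ℝ) < Real.sqrt y := Real.sqrt_pos.2 hy0
    have hsq : Real.sqrt y ^ 2 = y := Real.sq_sqrt hy0.le
    have hlogle : -Real.log y ≤ 2 / Real.sqrt y := by
      have h1 : Real.log (Real.sqrt y) = Real.log y / 2 := Real.log_sqrt hy0.le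
      have h2 : Real.log (1 / Real.sqrt y) ≤ 1 / Real.sqrt y - 1 :=
        Real.log_le_sub_one_of_pos (by positivity)
      rw [Real.log_div one_ne_zero (ne_of_gt hs), Real.log_one, h1] at h2
      have h3 : 2 / Real.sqrt y = 2 * (1 / Real.sqrt y) := by ring
      rw [h3]; linarith
    have hlogneg : Real.log y ≤ 0 := Real.log_nonpos hy0.le hy1.le
    have hrpow : y ^ (-(1/2) : ℝ) = 1 / Real.sqrt y := by
      rw [Real.rpow_neg hy0.le, Real.sqrt_eq_rpow]; norm_num
    simp only [norm_mul, norm_div, Real.norm_eq_abs]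
    have e1 : |Real.log y| = -Real.log y := abs_of_nonpos hlogneg
    have e2 : |y - 1| = 1 - y := by rw [abs_of_neg (by linarith)]; ring
    have e3 : |(2:ℝ)| = 2 := by norm_num
    have e4 : |1 - x| = 1 - x := abs_of_pos (by linarith)
    have e5 : |y ^ (-(1/2) : ℝ)| = 1 / Real.sqrt y := by
      rw [hrpow]; exact abs_of_pos (by positivity)
    rw [e1, e2, e3, e4, e5, div_le_iff₀ (by linarith : (0:ℝ) < 1 - y)]
    calc -Real.log y ≤ 2 / Real.sqrt y := hlogle
      _ = 2 / (1 - x) * (1 / Real.sqrt y) * (1 - x) := by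
          rw [mul_comm (2 / (1 - x)) _, mul_assoc,
            div_mul_cancel₀ _ (ne_of_gt (by linarith : (0:ℝ) < 1 - x))]
          ring
      _ ≤ 2 / (1 - x) * (1 / Real.sqrt y) * (1 - y) := by
          apply mul_le_mul_of_nonneg_left (by linarith)
          apply mul_nonneg (div_nonneg (by norm_num) (by linarith)) (by positivity)

lemma Gi_hasDeriv {x : ℝ} (hx : x ∈ Set.Ioo (0:ℝ) 1) :
    HasDerivAt Gi (Real.log x / (x - 1)) x := by
  obtain ⟨hx0, hx1⟩ := hx
  have hmeas : Measurable (fun y : ℝ => Real.log y / (y - 1)) :=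
    Real.measurable_log.div (measurable_id.sub measurable_const)
  exact integral_hasDerivAt_right (Gi_integrable hx0 hx1)
    hmeas.stronglyMeasurable.stronglyMeasurableAtFilter
    (ContinuousAt.div (Real.continuousAt_log (ne_of_gt hx0)) (by fun_prop)
      (by intro h; nlinarith))

noncomputable def s1 (c₁ c₂ c₃ x : ℝ) : ℝ :=
  (c₂ + c₃ * Real.log x) / (x - 1) / (x + 1) -
    (c₁ + c₂ * Fi x + c₃ * Gi x) / (x + 1) ^ 2

noncomputable def s2 (c₁ c₂ c₃ x : ℝ) : ℝ :=
  (c₃ / (x * (x - 1)) - (c₂ + c₃ * Real.log x) / (x - 1) ^ 2) / (x + 1) -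
    2 * ((c₂ + c₃ * Real.log x) / (x - 1)) / (x + 1) ^ 2 +
    2 * (c₁ + c₂ * Fi x + c₃ * Gi x) / (x + 1) ^ 3

noncomputable def s3 (c₁ c₂ c₃ x : ℝ) : ℝ :=
  (-(c₃ * (2 * x - 1)) / (x * (x - 1)) ^ 2 -
      (c₃ / (x * (x - 1)) - (c₂ + c₃ * Real.log x) / (x - 1) ^ 2) / (x - 1) +
      (c₂ + c₃ * Real.log x) / (x - 1) ^ 2 / (x - 1)) / (x + 1) -
    3 * (c₃ / (x * (x - 1)) - (c₂ + c₃ * Real.log x) / (x - 1) ^ 2) / (x + 1) ^ 2 +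
    6 * ((c₂ + c₃ * Real.log x) / (x - 1)) / (x + 1) ^ 3 -
    6 * (c₁ + c₂ * Fi x + c₃ * Gi x) / (x + 1) ^ 4

lemma s_hasDeriv (c₁ c₂ c₃ : ℝ) {x : ℝ} (hx : x ∈ Set.Ioo (0:ℝ) 1) :
    HasDerivAt (fun x => c₁ / (x + 1) + c₂ / (x + 1) * Fi x + c₃ / (x + 1) * Gi x)
      (s1 c₁ c₂ c₃ x) x := by
  obtain ⟨hx0, hx1⟩ := hx
  have hp1 : x + 1 ≠ 0 := by positivity
  have hm1 : x - 1 ≠ 0 := ne_of_lt (by linarith)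
  have hid : HasDerivAt (fun x : ℝ => x + 1) 1 x := (hasDerivAt_id x).add_const 1
  have hF' := Fi_hasDeriv ⟨hx0, hx1⟩
  have hG' := Gi_hasDeriv ⟨hx0, hx1⟩
  have hA := (hasDerivAt_const x c₁).div hid hp1
  have hB := (hasDerivAt_const x c₂).div hid hp1
  have hC := (hasDerivAt_const x c₃).div hid hp1
  have H := (hA.add (hB.mul hF')).add (hC.mul hG')
  refine H.congr_deriv ?_
  unfold s1
  simp only [Pi.div_apply, Pi.pow_apply, Pi.mul_apply, Pi.add_apply, Pi.sub_apply]
  field_simp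
  ring

lemma s1_hasDeriv (c₁ c₂ c₃ : ℝ) {x : ℝ} (hx : x ∈ Set.Ioo (0:ℝ) 1) :
    HasDerivAt (fun x => s1 c₁ c₂ c₃ x) (s2 c₁ c₂ c₃ x) x := by
  obtain ⟨hx0, hx1⟩ := hx
  have hp1 : x + 1 ≠ 0 := by positivity
  have hm1 : x - 1 ≠ 0 := ne_of_lt (by linarith)
  have hid : HasDerivAt (fun x : ℝ => x + 1) 1 x := (hasDerivAt_id x).add_const 1
  have hxm : HasDerivAt (fun x : ℝ => x - 1) 1 x := (hasDerivAt_id x).sub_const 1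
  have hF' := Fi_hasDeriv ⟨hx0, hx1⟩
  have hG' := Gi_hasDeriv ⟨hx0, hx1⟩
  have hlog : HasDerivAt Real.log x⁻¹ x := Real.hasDerivAt_log (ne_of_gt hx0)
  have hnum : HasDerivAt (fun x => c₂ + c₃ * Real.log x) (c₃ * x⁻¹) x :=
    (hlog.const_mul c₃).const_add c₂
  have hu : HasDerivAt (fun x => c₁ + c₂ * Fi x + c₃ * Gi x)
      (c₂ * (1 / (x - 1)) + c₃ * (Real.log x / (x - 1))) x :=
    ((hF'.const_mul c₂).const_add c₁).add (hG'.const_mul c₃)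
  have H := ((hnum.div hxm hm1).div hid hp1).sub
    (hu.div (hid.pow 2) (pow_ne_zero 2 hp1))
  refine H.congr_deriv ?_
  unfold s2
  simp only [Pi.div_apply, Pi.pow_apply, Pi.mul_apply, Pi.add_apply, Pi.sub_apply]
  field_simp
  ring

lemma s2_hasDeriv (c₁ c₂ c₃ : ℝ) {x : ℝ} (hx : x ∈ Set.Ioo (0:ℝ) 1) :
    HasDerivAt (fun x => s2 c₁ c₂ c₃ x) (s3 c₁ c₂ c₃ x) x := by
  obtain ⟨hx0, hx1⟩ := hx
  have hp1 : x + 1 ≠ 0 := by positivity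
  have hm1 : x - 1 ≠ 0 := ne_of_lt (by linarith)
  have hid : HasDerivAt (fun x : ℝ => x + 1) 1 x := (hasDerivAt_id x).add_const 1
  have hxm : HasDerivAt (fun x : ℝ => x - 1) 1 x := (hasDerivAt_id x).sub_const 1
  have hF' := Fi_hasDeriv ⟨hx0, hx1⟩
  have hG' := Gi_hasDeriv ⟨hx0, hx1⟩
  have hlog : HasDerivAt Real.log x⁻¹ x := Real.hasDerivAt_log (ne_of_gt hx0)
  have hnum : HasDerivAt (fun x => c₂ + c₃ * Real.log x) (c₃ * x⁻¹) x :=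
    (hlog.const_mul c₃).const_add c₂
  have hu : HasDerivAt (fun x => c₁ + c₂ * Fi x + c₃ * Gi x)
      (c₂ * (1 / (x - 1)) + c₃ * (Real.log x / (x - 1))) x :=
    ((hF'.const_mul c₂).const_add c₁).add (hG'.const_mul c₃)
  have hq : HasDerivAt (fun x : ℝ => x * (x - 1)) (1 * (x - 1) + x * 1) x :=
    (hasDerivAt_id x).mul hxm
  have hqne : x * (x - 1) ≠ 0 := mul_ne_zero (ne_of_gt hx0) hm1
  have hW := ((hasDerivAt_const x c₃).div hq hqne).sub
    (hnum.div (hxm.pow 2) (pow_ne_zero 2 hm1))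
  have H := ((hW.div hid hp1).sub
      (((hnum.div hxm hm1).const_mul 2).div (hid.pow 2) (pow_ne_zero 2 hp1))).add
    ((hu.const_mul 2).div (hid.pow 3) (pow_ne_zero 3 hp1))
  refine H.congr_deriv ?_
  unfold s3
  simp only [Pi.div_apply, Pi.pow_apply, Pi.mul_apply, Pi.add_apply, Pi.sub_apply]
  field_simp
  ring

/-- The general solution `s(x) = c₁/(x+1) + (c₂/(x+1))∫₀ˣ dy/(y−1)
+ (c₃/(x+1))∫₀ˣ log(y)/(y−1) dy` satisfies the third-order holonomic
differential equation on `(0,1)`. -/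
theorem ode_general_solution (c₁ c₂ c₃ : ℝ) (s : ℝ → ℝ)
    (hs : ∀ x : ℝ, s x =
      c₁ / (x + 1) +
      c₂ / (x + 1) * (∫ y in (0:ℝ)..x, 1 / (y - 1)) +
      c₃ / (x + 1) * (∫ y in (0:ℝ)..x, Real.log y / (y - 1))) :
    ∀ x ∈ Set.Ioo (0 : ℝ) 1,
      -((x - 1) ^ 2 * (x + 1) * x ^ 3) * deriv (deriv (deriv s)) x -
        (x - 1) * (2 * x - 1) * (3 * x + 1) * x ^ 2 * deriv (deriv s) x -
        (x - 1) * (7 * x - 1) * x ^ 2 * deriv s x -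
        (x - 1) * x ^ 2 * s x = 0 := by
  have hfun : s = fun x => c₁ / (x + 1) + c₂ / (x + 1) * Fi x + c₃ / (x + 1) * Gi x :=
    funext hs
  subst hfun
  intro x hx
  have hD1 : ∀ y ∈ Set.Ioo (0:ℝ) 1,
      deriv (fun x => c₁ / (x + 1) + c₂ / (x + 1) * Fi x + c₃ / (x + 1) * Gi x) y
        = s1 c₁ c₂ c₃ y := fun y hy => (s_hasDeriv c₁ c₂ c₃ hy).deriv
  have hD2 : ∀ y ∈ Set.Ioo (0:ℝ) 1,
      deriv (deriv (fun x => c₁ / (x + 1) + c₂ / (x + 1) * Fi x + c₃ / (x + 1) * Gi x)) y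
        = s2 c₁ c₂ c₃ y := by
    intro y hy
    have hev : deriv (fun x => c₁ / (x + 1) + c₂ / (x + 1) * Fi x + c₃ / (x + 1) * Gi x)
        =ᶠ[nhds y] fun x => s1 c₁ c₂ c₃ x :=
      Filter.eventuallyEq_of_mem (isOpen_Ioo.mem_nhds hy) hD1
    rw [hev.deriv_eq]
    exact (s1_hasDeriv c₁ c₂ c₃ hy).deriv
  have hD3 : deriv (deriv (deriv
      (fun x => c₁ / (x + 1) + c₂ / (x + 1) * Fi x + c₃ / (x + 1) * Gi x))) x
        = s3 c₁ c₂ c₃ x := by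
    have hev : deriv (deriv (fun x => c₁ / (x + 1) + c₂ / (x + 1) * Fi x + c₃ / (x + 1) * Gi x))
        =ᶠ[nhds x] fun x => s2 c₁ c₂ c₃ x :=
      Filter.eventuallyEq_of_mem (isOpen_Ioo.mem_nhds hx) hD2
    rw [hev.deriv_eq]
    exact (s2_hasDeriv c₁ c₂ c₃ hx).deriv
  obtain ⟨hx0, hx1⟩ := hx
  rw [hD3, hD2 x ⟨hx0, hx1⟩, hD1 x ⟨hx0, hx1⟩]
  simp only [s1, s2, s3, Fi, Gi]
  have hp1 : x + 1 ≠ 0 := by positivity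
  have hm1 : x - 1 ≠ 0 := ne_of_lt (by linarith)
  have hx0' : x ≠ 0 := ne_of_gt hx0
  set A := ∫ y in (0:ℝ)..x, 1 / (y - 1)
  set B := ∫ y in (0:ℝ)..x, Real.log y / (y - 1)
  set L := Real.log x
  field_simp
  ring
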